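/- If at least two of the coefficients Φ_0, Φ_1, …, Φ_g are nonzero, then there exist t ∈ ℝ and z ∈ ℂ with Im z ≠ 0 such that Ξ_t(z) = 0. -/

import Mathlib

open Complex

/-- The deformation `Ξ_t(z) = Φ₀ + ∑_{n=1}^g Φₙ e^{t n²} (e^{inz} + e^{-inz})`. -/
noncomputable def Xi (g : ℕ) (Φ : ℕ → ℝ) (t : ℝ) (z : ℂ) : ℂ :=
  (Φ 0 : ℂ) + ∑ n ∈ Finset.Icc 1 g,
    (Φ n : ℂ) * (Real.exp (t * (n : ℝ) ^ 2) : ℂ) *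
      (Complex.exp ((n : ℂ) * Complex.I * z) + Complex.exp (-((n : ℂ) * Complex.I * z)))

/-- The polynomial `P_t(w) = Φ₀ w^m + ∑_{n=1}^m Φₙ e^{t n²} (w^{m+n} + w^{m-n})`,
so that `P_t(e^{iz}) = e^{imz} Ξ_t(z)` when `Φ` vanishes above `m`. -/
noncomputable def XiPoly (m : ℕ) (Φ : ℕ → ℝ) (t : ℝ) : Polynomial ℂ :=
  Polynomial.C (Φ 0 : ℂ) * Polynomial.X ^ m +
  ∑ n ∈ Finset.Icc 1 m,
    Polynomial.C ((Φ n : ℂ) * (Real.exp (t * (n : ℝ) ^ 2) : ℂ)) *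
      (Polynomial.X ^ (m + n) + Polynomial.X ^ (m - n))

lemma XiPoly_coeff (m : ℕ) (hm : 1 ≤ m) (Φ : ℕ → ℝ) (t : ℝ) (k : ℕ) (hk : k ≤ m) :
    (XiPoly m Φ t).coeff (m + k)
      = (Φ k : ℂ) * (Real.exp (t * (k : ℝ) ^ 2) : ℂ) := by
  unfold XiPoly
  rw [Polynomial.coeff_add, Polynomial.finset_sum_coeff]
  rcases Nat.eq_zero_or_pos k with rfl | hk1
  · rw [Finset.sum_eq_zero, add_zero]
    · simp [mul_assoc, Polynomial.coeff_C_mul, Polynomial.coeff_add, Polynomial.coeff_X_pow]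
    · intro n hn
      simp only [Finset.mem_Icc] at hn
      have h1 : ¬ (m + 0 = m + n) := by omega
      have h2 : ¬ (m + 0 = m - n) := by omega
      have h2' : ¬ (m = m - n) := by omega
      simp only [mul_assoc, Polynomial.coeff_C_mul, Polynomial.coeff_add, Polynomial.coeff_X_pow,
        h1, h2, h2', if_false]
      simp
  · have h0 : ¬ (m + k = m) := by omega
    rw [Finset.sum_eq_single_of_mem k (Finset.mem_Icc.mpr ⟨hk1, hk⟩)]
    · have h2 : ¬ (m + k = m - k) := by omega
      simp [mul_assoc, Polynomial.coeff_C_mul, Polynomial.coeff_add, Polynomial.coeff_X_pow, h0, h2]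
      intro h; omega
    · intro n hn hne
      simp only [Finset.mem_Icc] at hn
      have h1 : ¬ (m + k = m + n) := by omega
      have h2 : ¬ (m + k = m - n) := by omega
      simp [mul_assoc, Polynomial.coeff_C_mul, Polynomial.coeff_add, Polynomial.coeff_X_pow, h1, h2]
      intro h; exact absurd h.symm hne

lemma XiPoly_coeff_zero (m : ℕ) (hm : 1 ≤ m) (Φ : ℕ → ℝ) (t : ℝ) :
    (XiPoly m Φ t).coeff 0
      = (Φ m : ℂ) * (Real.exp (t * (m : ℝ) ^ 2) : ℂ) := by
  unfold XiPoly
  rw [Polynomial.coeff_add, Polynomial.finset_sum_coeff]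
  have h0 : ¬ ((0 : ℕ) = m) := by omega
  rw [Finset.sum_eq_single_of_mem m (Finset.mem_Icc.mpr ⟨hm, le_refl m⟩)]
  · have h1 : ¬ ((0 : ℕ) = m + m) := by omega
    simp [mul_assoc, Polynomial.coeff_C_mul, Polynomial.coeff_add, Polynomial.coeff_X_pow, h0, h1,
      Nat.sub_self]
  · intro n hn hne
    simp only [Finset.mem_Icc] at hn
    have h1 : ¬ ((0 : ℕ) = m + n) := by omega
    have h2 : ¬ ((0 : ℕ) = m - n) := by omega
    simp [mul_assoc, Polynomial.coeff_C_mul, Polynomial.coeff_add, Polynomial.coeff_X_pow, h1, h2]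

lemma XiPoly_coeff_gt (m : ℕ) (hm : 1 ≤ m) (Φ : ℕ → ℝ) (t : ℝ) (j : ℕ) (hj : 2 * m < j) :
    (XiPoly m Φ t).coeff j = 0 := by
  unfold XiPoly
  rw [Polynomial.coeff_add, Polynomial.finset_sum_coeff]
  have h0 : ¬ (j = m) := by omega
  rw [Finset.sum_eq_zero, add_zero]
  · simp [mul_assoc, Polynomial.coeff_C_mul, Polynomial.coeff_add, Polynomial.coeff_X_pow, h0]
  · intro n hn
    simp only [Finset.mem_Icc] at hn
    have h1 : ¬ (j = m + n) := by omega
    have h2 : ¬ (j = m - n) := by omega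
    simp [mul_assoc, Polynomial.coeff_C_mul, Polynomial.coeff_add, Polynomial.coeff_X_pow, h1, h2]

lemma XiPoly_natDegree (m : ℕ) (hm : 1 ≤ m) (Φ : ℕ → ℝ) (hΦm : Φ m ≠ 0) (t : ℝ) :
    (XiPoly m Φ t).natDegree = 2 * m := by
  refine Polynomial.natDegree_eq_of_le_of_coeff_ne_zero
    (Polynomial.natDegree_le_iff_coeff_eq_zero.mpr fun N hN => XiPoly_coeff_gt m hm Φ t N hN) ?_
  have : 2 * m = m + m := by omega
  rw [this, XiPoly_coeff m hm Φ t m (le_refl m)]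
  exact mul_ne_zero (by exact_mod_cast hΦm) (by
    simp [Complex.ofReal_ne_zero, Real.exp_ne_zero])

/-- Bound on coefficients of a product of linear factors with roots in the closed unit disc. -/
lemma coeff_prod_bound (s : Multiset ℂ) :
    (∀ r ∈ s, ‖r‖ ≤ 1) → ∀ j : ℕ,
      ‖((s.map fun r => Polynomial.X - Polynomial.C r).prod).coeff j‖
        ≤ ((Multiset.card s).choose j : ℝ) := by
  induction s using Multiset.induction_on with
  | empty =>
    intro _ j
    cases j with
    | zero => simp
    | succ j => simp [Polynomial.coeff_one]
  | cons a s ih =>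
    intro h j
    have ha : ‖a‖ ≤ 1 := h a (Multiset.mem_cons_self a s)
    have hs : ∀ r ∈ s, ‖r‖ ≤ 1 := fun r hr => h r (Multiset.mem_cons_of_mem hr)
    set p := (s.map fun r => Polynomial.X - Polynomial.C r).prod with hp
    rw [Multiset.map_cons, Multiset.prod_cons, mul_comm]
    cases j with
    | zero =>
      have h1 := ih hs 0
      rw [Polynomial.mul_coeff_zero]
      have hc : (Polynomial.X - Polynomial.C a).coeff 0 = -a := by simp
      rw [hc, norm_mul, norm_neg]
      simp only [Nat.choose_zero_right, Nat.cast_one] at h1 ⊢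
      calc ‖p.coeff 0‖ * ‖a‖ ≤ 1 * 1 := mul_le_mul h1 ha (norm_nonneg _) zero_le_one
        _ = 1 := by ring
    | succ j =>
      have h1 := ih hs j
      have h2 := ih hs (j + 1)
      rw [Polynomial.coeff_mul_X_sub_C]
      have hb : ‖p.coeff j - p.coeff (j + 1) * a‖
          ≤ ‖p.coeff j‖ + ‖p.coeff (j + 1)‖ * ‖a‖ := by
        rw [← norm_mul]; exact norm_sub_le _ _
      have hc : ‖p.coeff j‖ + ‖p.coeff (j + 1)‖ * ‖a‖
          ≤ ((Multiset.card s).choose j : ℝ) + ((Multiset.card s).choose (j + 1) : ℝ) * 1 := by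
        gcongr
      have hd : ((Multiset.card s).choose j : ℝ) + ((Multiset.card s).choose (j + 1) : ℝ) * 1
          = ((Multiset.card (a ::ₘ s)).choose (j + 1) : ℝ) := by
        rw [Multiset.card_cons, mul_one, Nat.choose_succ_succ]
        push_cast; ring
      linarith

lemma XiPoly_eval (g m : ℕ) (hm : 1 ≤ m) (hmg : m ≤ g) (Φ : ℕ → ℝ)
    (hΦ : ∀ n, m < n → n ≤ g → Φ n = 0) (t : ℝ) (z : ℂ) (w : ℂ) (hw : w ≠ 0)
    (hwz : Complex.exp (Complex.I * z) = w) :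
    (XiPoly m Φ t).eval w = w ^ m * Xi g Φ t z := by
  have hexp : ∀ n : ℕ, Complex.exp ((n : ℂ) * Complex.I * z) = w ^ n := by
    intro n
    rw [mul_assoc, Complex.exp_nat_mul, hwz]
  unfold XiPoly Xi
  rw [Polynomial.eval_add, Polynomial.eval_mul, Polynomial.eval_C, Polynomial.eval_pow,
    Polynomial.eval_X, Polynomial.eval_finset_sum]
  have hsplit : ∑ n ∈ Finset.Icc 1 g,
      (Φ n : ℂ) * (Real.exp (t * (n : ℝ) ^ 2) : ℂ) *
        (Complex.exp ((n : ℂ) * Complex.I * z) + Complex.exp (-((n : ℂ) * Complex.I * z)))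
      = ∑ n ∈ Finset.Icc 1 m,
      (Φ n : ℂ) * (Real.exp (t * (n : ℝ) ^ 2) : ℂ) *
        (Complex.exp ((n : ℂ) * Complex.I * z) + Complex.exp (-((n : ℂ) * Complex.I * z))) := by
    have hIcc : ∀ N : ℕ, Finset.Icc 1 N = Finset.Ioc 0 N := by
      intro N; ext x; simp [Finset.mem_Icc, Finset.mem_Ioc]; omega
    rw [hIcc g, hIcc m, ← Finset.sum_Ioc_consecutive _ (Nat.zero_le m) hmg]
    have : ∑ n ∈ Finset.Ioc m g,
        (Φ n : ℂ) * (Real.exp (t * (n : ℝ) ^ 2) : ℂ) *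
          (Complex.exp ((n : ℂ) * Complex.I * z) + Complex.exp (-((n : ℂ) * Complex.I * z))) = 0 := by
      refine Finset.sum_eq_zero fun n hn => ?_
      simp only [Finset.mem_Ioc] at hn
      rw [hΦ n hn.1 hn.2]
      simp
    rw [this, add_zero]
  rw [hsplit, mul_add, Finset.mul_sum]
  congr 1
  · ring
  · refine Finset.sum_congr rfl fun n hn => ?_
    simp only [Finset.mem_Icc] at hn
    rw [hexp n, Complex.exp_neg, hexp n]
    rw [Polynomial.eval_mul, Polynomial.eval_C, Polynomial.eval_add, Polynomial.eval_pow,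
      Polynomial.eval_pow, Polynomial.eval_X]
    rw [pow_sub₀ w hw hn.2, pow_add]
    field_simp

/-- If at least two of the coefficients `Φ₀, …, Φ_g` are nonzero, then some deformation
`Ξ_t` has a non-real zero. -/
theorem exists_nonreal_zero_of_two_nonzero_coeffs (g : ℕ) (hg : 1 ≤ g) (Φ : ℕ → ℝ)
    (h : ∃ i j : ℕ, i ≤ g ∧ j ≤ g ∧ i ≠ j ∧ Φ i ≠ 0 ∧ Φ j ≠ 0) :
    ∃ (t : ℝ) (z : ℂ), z.im ≠ 0 ∧ Xi g Φ t z = 0 := by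
  obtain ⟨i, j, hig, hjg, hij, hΦi, hΦj⟩ := h
  -- the set of positive indices with nonzero coefficient
  set S : Finset ℕ := (Finset.Icc 1 g).filter (fun n => Φ n ≠ 0) with hS
  have hmemS : ∀ n, n ∈ S ↔ (1 ≤ n ∧ n ≤ g ∧ Φ n ≠ 0) := by
    intro n
    simp only [hS, Finset.mem_filter, Finset.mem_Icc]
    tauto
  have hSne : S.Nonempty := by
    rcases Nat.eq_zero_or_pos i with hi0 | hi1
    · exact ⟨j, (hmemS j).mpr ⟨by omega, hjg, hΦj⟩⟩
    · exact ⟨i, (hmemS i).mpr ⟨hi1, hig, hΦi⟩⟩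
  set m := S.max' hSne with hm
  have hmS : m ∈ S := S.max'_mem hSne
  have hm1 : 1 ≤ m := ((hmemS m).mp hmS).1
  have hmg : m ≤ g := ((hmemS m).mp hmS).2.1
  have hΦm : Φ m ≠ 0 := ((hmemS m).mp hmS).2.2
  have hmax : ∀ n ∈ S, n ≤ m := fun n hn => S.le_max' n hn
  have hvan : ∀ n, m < n → n ≤ g → Φ n = 0 := by
    intro n h1 h2
    by_contra hne
    have := hmax n ((hmemS n).mpr ⟨by omega, h2, hne⟩)
    omega
  -- a second nonzero coefficient below m
  have hkex : ∃ k, k < m ∧ Φ k ≠ 0 := by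
    by_cases hi : i = m
    · refine ⟨j, ?_, hΦj⟩
      rcases Nat.eq_zero_or_pos j with h0 | h1
      · omega
      · have := hmax j ((hmemS j).mpr ⟨h1, hjg, hΦj⟩)
        omega
    · refine ⟨i, ?_, hΦi⟩
      rcases Nat.eq_zero_or_pos i with h0 | h1
      · omega
      · have := hmax i ((hmemS i).mpr ⟨h1, hig, hΦi⟩)
        omega
  obtain ⟨k, hkm, hΦk⟩ := hkex
  -- choose the deformation parameter t
  set B : ℝ := ((2 * m).choose (m + k) : ℝ) with hB
  have hB1 : (1 : ℝ) ≤ B := by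
    have h0 : 0 < (2 * m).choose (m + k) := Nat.choose_pos (by omega)
    rw [hB]
    exact_mod_cast h0
  have hBpos : (0 : ℝ) < B := lt_of_lt_of_le zero_lt_one hB1
  have hΦkpos : 0 < |Φ k| := abs_pos.mpr hΦk
  have hΦmpos : 0 < |Φ m| := abs_pos.mpr hΦm
  set r : ℝ := |Φ k| / (|Φ m| * B) with hr
  have hrpos : 0 < r := div_pos hΦkpos (mul_pos hΦmpos hBpos)
  set d : ℝ := (m : ℝ) ^ 2 - (k : ℝ) ^ 2 with hd
  have hdpos : 0 < d := by
    have h1 : (k : ℝ) < (m : ℝ) := by exact_mod_cast hkm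
    have h2 : (0 : ℝ) ≤ (k : ℝ) := Nat.cast_nonneg k
    rw [hd]; nlinarith
  set t : ℝ := (Real.log r - 1) / d with ht
  have htd : t * d = Real.log r - 1 := div_mul_cancel₀ _ hdpos.ne'
  -- the key inequality violating the coefficient bound
  have key : |Φ m| * Real.exp (t * (m : ℝ) ^ 2) * B < |Φ k| * Real.exp (t * (k : ℝ) ^ 2) := by
    have hsplit : t * (m : ℝ) ^ 2 = t * (k : ℝ) ^ 2 + t * d := by rw [hd]; ring
    rw [hsplit, Real.exp_add, htd, Real.exp_sub, Real.exp_log hrpos]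
    have hek : 0 < Real.exp (t * (k : ℝ) ^ 2) := Real.exp_pos _
    have heq : |Φ m| * (Real.exp (t * (k : ℝ) ^ 2) * (r / Real.exp 1)) * B
        = |Φ k| / Real.exp 1 * Real.exp (t * (k : ℝ) ^ 2) := by
      rw [hr]
      field_simp
    rw [heq]
    have hlt : |Φ k| / Real.exp 1 < |Φ k| := by
      apply div_lt_self hΦkpos
      have := Real.exp_one_gt_d9
      linarith
    calc |Φ k| / Real.exp 1 * Real.exp (t * (k : ℝ) ^ 2)
        < |Φ k| * Real.exp (t * (k : ℝ) ^ 2) := by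
          exact mul_lt_mul_of_pos_right hlt hek
      _ = |Φ k| * Real.exp (t * (k : ℝ) ^ 2) := rfl
  -- the associated polynomial
  set P := XiPoly m Φ t with hP
  have hdeg : P.natDegree = 2 * m := XiPoly_natDegree m hm1 Φ hΦm t
  have hc2m : P.coeff (m + m) ≠ 0 := by
    rw [hP, XiPoly_coeff m hm1 Φ t m le_rfl]
    exact mul_ne_zero (by exact_mod_cast hΦm) (by
      simp [Complex.ofReal_ne_zero, Real.exp_ne_zero])
  have hPne : P ≠ 0 := fun h0 => hc2m (by rw [h0]; simp)
  have hlead : P.leadingCoeff = (Φ m : ℂ) * (Real.exp (t * (m : ℝ) ^ 2) : ℂ) := by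
    rw [Polynomial.leadingCoeff, hdeg, show 2 * m = m + m by ring, hP,
      XiPoly_coeff m hm1 Φ t m le_rfl]
  have hcard : Multiset.card P.roots = P.natDegree :=
    Polynomial.splits_iff_card_roots.mp (IsAlgClosed.splits P)
  -- there is a root off the unit circle
  have hoff : ∃ w ∈ P.roots, ‖w‖ ≠ 1 := by
    by_contra hall
    push_neg at hall
    have hall' : ∀ w ∈ P.roots, ‖w‖ ≤ 1 := fun w hw => le_of_eq (hall w hw)
    have hfac := Polynomial.C_leadingCoeff_mul_prod_multiset_X_sub_C (p := P) hcard
    have hcoeff : P.coeff (m + k)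
        = P.leadingCoeff * ((P.roots.map fun w => Polynomial.X - Polynomial.C w).prod).coeff (m + k) := by
      conv_lhs => rw [← hfac]
      rw [Polynomial.coeff_C_mul]
    have hbound := coeff_prod_bound P.roots hall' (m + k)
    rw [hcard, hdeg] at hbound
    have hnorm : ‖P.coeff (m + k)‖ ≤ ‖P.leadingCoeff‖ * B := by
      rw [hcoeff, norm_mul, hB]
      exact mul_le_mul_of_nonneg_left hbound (norm_nonneg _)
    have h1 : ‖P.coeff (m + k)‖ = |Φ k| * Real.exp (t * (k : ℝ) ^ 2) := by
      rw [hP, XiPoly_coeff m hm1 Φ t k (le_of_lt hkm), norm_mul, Complex.norm_real,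
        Complex.norm_real, Real.norm_eq_abs, Real.norm_eq_abs, abs_of_pos (Real.exp_pos _)]
    have h2 : ‖P.leadingCoeff‖ = |Φ m| * Real.exp (t * (m : ℝ) ^ 2) := by
      rw [hlead, norm_mul, Complex.norm_real, Complex.norm_real, Real.norm_eq_abs,
        Real.norm_eq_abs, abs_of_pos (Real.exp_pos _)]
    rw [h1, h2] at hnorm
    linarith
  obtain ⟨w, hwroot, hwnorm⟩ := hoff
  have hweval : P.eval w = 0 := (Polynomial.mem_roots'.mp hwroot).2
  have hw0 : w ≠ 0 := by
    intro h0
    have hcz := XiPoly_coeff_zero m hm1 Φ t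
    rw [← hP, Polynomial.coeff_zero_eq_eval_zero, ← h0, hweval] at hcz
    exact mul_ne_zero (by exact_mod_cast hΦm) (by
      simp [Complex.ofReal_ne_zero, Real.exp_ne_zero]) hcz.symm
  -- the corresponding non-real zero of Ξ_t
  set z : ℂ := -Complex.I * Complex.log w with hz
  have hiz : Complex.I * z = Complex.log w := by
    rw [hz]
    have : Complex.I * (-Complex.I * Complex.log w)
        = -(Complex.I * Complex.I) * Complex.log w := by ring
    rw [this, Complex.I_mul_I]
    ring
  have hwz : Complex.exp (Complex.I * z) = w := by rw [hiz]; exact Complex.exp_log hw0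
  have him : z.im ≠ 0 := by
    have himz : z.im = -((Complex.log w).re) := by
      rw [hz]
      simp [Complex.mul_im]
    rw [himz, neg_ne_zero, Complex.log_re]
    intro h0
    rcases Real.log_eq_zero.mp h0 with hh | hh | hh
    · exact hw0 (norm_eq_zero.mp hh)
    · exact hwnorm (by rw [hh])
    · have := norm_nonneg w
      linarith [hh ▸ this]
  refine ⟨t, z, him, ?_⟩
  have heval := XiPoly_eval g m hm1 hmg Φ hvan t z w hw0 hwz
  rw [← hP, hweval] at heval
  have hwm : w ^ m ≠ 0 := pow_ne_zero _ hw0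
  exact (mul_eq_zero.mp heval.symm).resolve_left hwm
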